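/- Let d ≥ 1 and consider the single-qudit classical-verification ticket scheme with the computational basis {|t⟩} and its Fourier transform {F|t⟩} (F the quantum Fourier transform on ℂ^d): the key is (t,b) ∈ {0,…,d−1} × {0,1} chosen uniformly, the ticket state is |t⟩ if b = 0 and F|t⟩ if b = 1, the bank independently sends two uniform challenges c_1, c_2 ∈ {0,1}, and (a_1,a_2) is accepted if a_j = t whenever c_j = b. There exists a counterfeiting strategy, given for each challenge pair (c_1,c_2) by a POVM {A_{c_1 c_2}^{a_1 a_2}}_{a_1,a_2 ∈ {0,…,d−1}} on ℂ^d, whose success probability is exactly 3/4 + 1/(4√d). -/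

import Mathlib

open Matrix
open scoped ComplexOrder

/-- The quantum Fourier transform on `ℂ^d`, `⟨j|F|i⟩ = ω^{ij}/√d`, `ω = e^{2πi/d}`. -/
noncomputable def fourierMat (d : ℕ) : Matrix (Fin d) (Fin d) ℂ :=
  Matrix.of fun j i =>
    Complex.exp (2 * Real.pi * Complex.I / d) ^ ((j : ℕ) * (i : ℕ)) / Real.sqrt d

/-- The ticket state for key `(t,b)`: the computational basis vector `|t⟩` if `b = 0`,
and its Fourier transform `F|t⟩` if `b = 1`. -/
noncomputable def fticket (d : ℕ) (b : Fin 2) (t : Fin d) : Fin d → ℂ :=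
  if b = 0 then (fun j => if j = t then 1 else 0) else (fun j => fourierMat d j t)

/-! ### Auxiliary machinery for the attack -/

/-- `e^{2πi n/d}` for integer `n`. -/
noncomputable def efn (d : ℕ) (n : ℤ) : ℂ := Complex.exp (2 * Real.pi * Complex.I * n / d)

lemma efn_zero (d : ℕ) : efn d 0 = 1 := by simp [efn]

lemma efn_add (d : ℕ) (m n : ℤ) : efn d (m + n) = efn d m * efn d n := by
  rw [efn, efn, efn, ← Complex.exp_add]
  congr 1
  push_cast
  ring

lemma efn_conj (d : ℕ) (n : ℤ) : (starRingEnd ℂ) (efn d n) = efn d (-n) := by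
  rw [efn, efn, ← Complex.exp_conj]
  congr 1
  simp only [map_div₀, _root_.map_mul, Complex.conj_I, map_intCast, map_natCast,
    Complex.conj_ofReal, map_ofNat]
  push_cast
  ring

lemma efn_normSq (d : ℕ) (n : ℤ) : Complex.normSq (efn d n) = 1 := by
  have h : (Complex.normSq (efn d n) : ℂ) = 1 := by
    rw [← Complex.mul_conj, efn_conj, ← efn_add]
    simp [efn_zero]
  exact_mod_cast h

lemma efn_pow (d : ℕ) (m : ℤ) (a : ℕ) : efn d m ^ a = efn d (m * a) := by
  rw [efn, efn, ← Complex.exp_nat_mul]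
  congr 1
  push_cast
  ring

lemma efn_int_mul (d : ℕ) (k : ℤ) : efn d (d * k) = 1 := by
  rcases Nat.eq_zero_or_pos d with h | h
  · simp [efn, h]
  · rw [efn]
    have hd : (d : ℂ) ≠ 0 := by exact_mod_cast h.ne'
    have harg : (2 * (Real.pi : ℂ) * Complex.I * ((((d : ℤ) * k : ℤ)) : ℂ) / d)
        = (k : ℂ) * (2 * Real.pi * Complex.I) := by
      push_cast
      field_simp
    rw [harg]
    exact_mod_cast Complex.exp_int_mul_two_pi_mul_I k

lemma efn_sum (d : ℕ) (hd : 1 ≤ d) (m : ℤ) :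
    ∑ a : Fin d, efn d (m * a) = if (d : ℤ) ∣ m then (d : ℂ) else 0 := by
  by_cases h : (d : ℤ) ∣ m
  · obtain ⟨k, rfl⟩ := h
    simp only [if_pos (Dvd.intro k rfl)]
    have he : ∀ a : Fin d, efn d ((d : ℤ) * k * a) = 1 := by
      intro a
      have : (d : ℤ) * k * a = d * (k * a) := by ring
      rw [this, efn_int_mul]
    simp [he]
  · rw [if_neg h]
    have hz1 : efn d m ≠ 1 := by
      intro hc
      apply h
      rw [efn] at hc
      obtain ⟨n, hn⟩ := Complex.exp_eq_one_iff.mp hc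
      have hdc : (d : ℂ) ≠ 0 := by
        exact_mod_cast (Nat.one_le_iff_ne_zero.mp hd)
      have hpi : (Real.pi : ℂ) ≠ 0 := by exact_mod_cast Real.pi_ne_zero
      have hmc : (m : ℂ) = (n : ℂ) * d := by
        have h2 : (2 : ℂ) * Real.pi * Complex.I ≠ 0 := by
          simp [Complex.I_ne_zero, hpi]
        apply mul_left_cancel₀ h2
        field_simp at hn
        rw [hn]
        ring
      have hm : m = n * d := by exact_mod_cast hmc
      exact ⟨n, by rw [hm]; ring⟩
    have hzd : efn d m ^ d = 1 := by
      rw [efn_pow]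
      have : m * (d : ℤ) = d * m := by ring
      rw [this, efn_int_mul]
    have hsum : ∑ a : Fin d, efn d (m * a) = ∑ a : Fin d, efn d m ^ (a : ℕ) := by
      refine Finset.sum_congr rfl fun a _ => ?_
      rw [efn_pow]
    rw [hsum, Fin.sum_univ_eq_sum_range, geom_sum_eq hz1, hzd]
    simp

lemma fin_dvd_sub_iff (d : ℕ) (j k : Fin d) : (d : ℤ) ∣ ((j : ℤ) - k) ↔ j = k := by
  constructor
  · intro h
    have h1 : ((j : ℤ) - k) = 0 := by
      refine Int.eq_zero_of_dvd_of_natAbs_lt_natAbs h ?_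
      have hj := j.isLt
      have hk := k.isLt
      omega
    have : (j : ℤ) = k := by omega
    exact Fin.ext (by exact_mod_cast this)
  · rintro rfl; simp

lemma fourierMat_apply (d : ℕ) (j i : Fin d) :
    fourierMat d j i = efn d ((j : ℤ) * i) / (Real.sqrt d : ℝ) := by
  rw [fourierMat, Matrix.of_apply]
  congr 1
  have h1 : Complex.exp (2 * Real.pi * Complex.I / d) = efn d 1 := by
    rw [efn]; norm_num
  rw [h1, efn_pow]
  congr 1
  push_cast
  ring

/-- Outer product `w w†`. -/
noncomputable def outerM (d : ℕ) (w : Fin d → ℂ) : Matrix (Fin d) (Fin d) ℂ :=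
  Matrix.of fun j k => w j * (starRingEnd ℂ) (w k)

lemma outerM_quad (d : ℕ) (w ψ : Fin d → ℂ) :
    star ψ ⬝ᵥ (outerM d w) *ᵥ ψ =
      (starRingEnd ℂ) (star w ⬝ᵥ ψ) * (star w ⬝ᵥ ψ) := by
  simp only [dotProduct, mulVec, outerM, Matrix.of_apply, Pi.star_apply, map_sum,
    _root_.map_mul, Complex.conj_conj, RingHom.id_apply]
  rw [Finset.sum_mul_sum]
  apply Finset.sum_congr rfl; intro j _
  rw [Finset.mul_sum]
  apply Finset.sum_congr rfl; intro k _
  simp only [RCLike.star_def, Complex.conj_conj]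
  ring

lemma outerM_quad_re (d : ℕ) (w ψ : Fin d → ℂ) :
    (star ψ ⬝ᵥ (outerM d w) *ᵥ ψ).re = Complex.normSq (star w ⬝ᵥ ψ) := by
  rw [outerM_quad, mul_comm, Complex.mul_conj]
  simp

lemma outerM_smul_quad_re (d : ℕ) (w ψ : Fin d → ℂ) (r : ℝ) :
    (star ψ ⬝ᵥ (((r : ℝ) : ℂ) • outerM d w) *ᵥ ψ).re =
      r * Complex.normSq (star w ⬝ᵥ ψ) := by
  rw [smul_mulVec, dotProduct_smul, smul_eq_mul, outerM_quad,
    mul_comm ((starRingEnd ℂ) _), Complex.mul_conj]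
  simp

lemma outerM_psd_smul (d : ℕ) (w : Fin d → ℂ) (r : ℝ) (hr : 0 ≤ r) :
    (((r : ℝ) : ℂ) • outerM d w).PosSemidef := by
  rw [Matrix.posSemidef_iff_dotProduct_mulVec]
  constructor
  · unfold Matrix.IsHermitian
    ext j k
    simp [outerM, conjTranspose_apply, Complex.conj_ofReal, mul_comm]
  · intro x
    rw [smul_mulVec, dotProduct_smul]
    have h := outerM_quad d w x
    rw [smul_eq_mul, h]
    have h1 : (0 : ℂ) ≤ (starRingEnd ℂ) (star w ⬝ᵥ x) * (star w ⬝ᵥ x) := by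
      rw [mul_comm, Complex.mul_conj]
      exact_mod_cast Complex.normSq_nonneg _
    have h2 : (0 : ℂ) ≤ ((r : ℝ) : ℂ) := by exact_mod_cast hr
    exact mul_nonneg h2 h1

lemma outerM_psd (d : ℕ) (w : Fin d → ℂ) : (outerM d w).PosSemidef := by
  have h := outerM_psd_smul d w 1 zero_le_one
  simpa using h

/-- The attack vector for challenge pairs with `c₁ ≠ c₂`: computational-basis guess `a₁`,
Fourier-basis guess `a₂`. -/
noncomputable def avec (d : ℕ) (a₁ a₂ : Fin d) : Fin d → ℂ :=
  fun j => (if j = a₁ then 1 else 0) +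
    efn d ((a₂ : ℤ) * ((j : ℤ) - (a₁ : ℤ))) / (Real.sqrt d : ℝ)

lemma avec_conj (d : ℕ) (a₁ a₂ k : Fin d) :
    (starRingEnd ℂ) (avec d a₁ a₂ k) =
      (if k = a₁ then 1 else 0) +
        efn d (-((a₂ : ℤ) * ((k : ℤ) - (a₁ : ℤ)))) / (Real.sqrt d : ℝ) := by
  rw [avec, map_add, map_div₀, efn_conj, Complex.conj_ofReal]
  congr 1
  split <;> simp

noncomputable def cC (d : ℕ) : ℝ := 1 / (2 * d + 2 * Real.sqrt d)

/-- The counterfeiting POVMs. -/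
noncomputable def attackA (d : ℕ) (c₁ c₂ : Fin 2) (a₁ a₂ : Fin d) :
    Matrix (Fin d) (Fin d) ℂ :=
  if c₁ = 0 then
    if c₂ = 0 then (if a₁ = a₂ then outerM d (fun j => if j = a₁ then 1 else 0) else 0)
    else ((cC d : ℝ) : ℂ) • outerM d (avec d a₁ a₂)
  else
    if c₂ = 0 then ((cC d : ℝ) : ℂ) • outerM d (avec d a₂ a₁)
    else (if a₁ = a₂ then outerM d (fun j => fourierMat d j a₁) else 0)

section sums
variable {d : ℕ}

lemma sqrt_ne_zero' (hd : 1 ≤ d) : (Real.sqrt d : ℝ) ≠ 0 := by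
  have : (0:ℝ) < d := by exact_mod_cast hd
  positivity

lemma sqrt_mul_self' (d : ℕ) : (Real.sqrt d : ℝ) * Real.sqrt d = d :=
  Real.mul_self_sqrt (by positivity)

lemma sqrtC_mul_self (d : ℕ) : ((Real.sqrt d : ℝ) : ℂ) * ((Real.sqrt d : ℝ) : ℂ) = (d : ℂ) := by
  exact_mod_cast congrArg (Complex.ofReal) (sqrt_mul_self' d)

lemma S1sum (j k : Fin d) :
    ∑ a₁ : Fin d, ∑ _a₂ : Fin d, ((if j = a₁ then (1:ℂ) else 0) * (if k = a₁ then 1 else 0))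
      = if j = k then (d : ℂ) else 0 := by
  simp only [Finset.sum_const, Finset.card_univ, Fintype.card_fin, nsmul_eq_mul, ite_mul,
    one_mul, zero_mul, mul_ite, mul_one, mul_zero]
  rw [Finset.sum_ite_eq]
  by_cases h : j = k <;> simp [h, eq_comm]

lemma S2sum (hd : 1 ≤ d) (j k : Fin d) :
    ∑ a₁ : Fin d, ∑ a₂ : Fin d,
        ((if j = a₁ then (1:ℂ) else 0) *
          (efn d (-((a₂ : ℤ) * ((k : ℤ) - (a₁ : ℤ)))) / (Real.sqrt d : ℝ)))
      = if j = k then ((Real.sqrt d : ℝ) : ℂ) else 0 := by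
  have hinner : ∀ a₁ : Fin d,
      ∑ a₂ : Fin d, efn d (-((a₂ : ℤ) * ((k : ℤ) - (a₁ : ℤ))))
        = if (d:ℤ) ∣ ((a₁ : ℤ) - k) then (d : ℂ) else 0 := by
    intro a₁
    rw [← efn_sum d hd ((a₁ : ℤ) - k)]
    refine Finset.sum_congr rfl fun a₂ _ => ?_
    congr 1
    ring
  calc ∑ a₁ : Fin d, ∑ a₂ : Fin d,
        ((if j = a₁ then (1:ℂ) else 0) *
          (efn d (-((a₂ : ℤ) * ((k : ℤ) - (a₁ : ℤ)))) / (Real.sqrt d : ℝ)))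
      = ∑ a₁ : Fin d, (if j = a₁ then (1:ℂ) else 0) *
          ((if (d:ℤ) ∣ ((a₁ : ℤ) - k) then (d : ℂ) else 0) / (Real.sqrt d : ℝ)) := by
        refine Finset.sum_congr rfl fun a₁ _ => ?_
        rw [← hinner a₁]
        simp only [div_eq_mul_inv, ← Finset.sum_mul, ← Finset.mul_sum]
    _ = (if (d:ℤ) ∣ ((j : ℤ) - k) then (d : ℂ) else 0) / (Real.sqrt d : ℝ) := by
        simp [Finset.sum_ite_eq]
    _ = if j = k then ((Real.sqrt d : ℝ) : ℂ) else 0 := by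
        simp only [fin_dvd_sub_iff]
        by_cases h : j = k
        · rw [if_pos h, if_pos h, ← sqrtC_mul_self d,
            mul_div_assoc, div_self (by exact_mod_cast sqrt_ne_zero' hd), mul_one]
        · simp [h]

lemma S3sum (hd : 1 ≤ d) (j k : Fin d) :
    ∑ a₁ : Fin d, ∑ a₂ : Fin d,
        ((efn d ((a₂ : ℤ) * ((j : ℤ) - (a₁ : ℤ))) / (Real.sqrt d : ℝ)) *
          (if k = a₁ then (1:ℂ) else 0))
      = if j = k then ((Real.sqrt d : ℝ) : ℂ) else 0 := by
  have hinner : ∀ a₁ : Fin d,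
      ∑ a₂ : Fin d, efn d ((a₂ : ℤ) * ((j : ℤ) - (a₁ : ℤ)))
        = if (d:ℤ) ∣ ((j : ℤ) - a₁) then (d : ℂ) else 0 := by
    intro a₁
    rw [← efn_sum d hd ((j : ℤ) - a₁)]
    refine Finset.sum_congr rfl fun a₂ _ => ?_
    congr 1
    ring
  calc ∑ a₁ : Fin d, ∑ a₂ : Fin d,
        ((efn d ((a₂ : ℤ) * ((j : ℤ) - (a₁ : ℤ))) / (Real.sqrt d : ℝ)) *
          (if k = a₁ then (1:ℂ) else 0))
      = ∑ a₁ : Fin d, (if k = a₁ then (1:ℂ) else 0) *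
          ((if (d:ℤ) ∣ ((j : ℤ) - a₁) then (d : ℂ) else 0) / (Real.sqrt d : ℝ)) := by
        refine Finset.sum_congr rfl fun a₁ _ => ?_
        rw [← hinner a₁]
        simp only [div_eq_mul_inv, ← Finset.sum_mul, ← Finset.mul_sum]
        ring
    _ = (if (d:ℤ) ∣ ((j : ℤ) - k) then (d : ℂ) else 0) / (Real.sqrt d : ℝ) := by
        simp [Finset.sum_ite_eq]
    _ = if j = k then ((Real.sqrt d : ℝ) : ℂ) else 0 := by
        simp only [fin_dvd_sub_iff]
        by_cases h : j = k
        · rw [if_pos h, if_pos h, ← sqrtC_mul_self d,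
            mul_div_assoc, div_self (by exact_mod_cast sqrt_ne_zero' hd), mul_one]
        · simp [h]

lemma S4sum (hd : 1 ≤ d) (j k : Fin d) :
    ∑ a₁ : Fin d, ∑ a₂ : Fin d,
        ((efn d ((a₂ : ℤ) * ((j : ℤ) - (a₁ : ℤ))) / (Real.sqrt d : ℝ)) *
          (efn d (-((a₂ : ℤ) * ((k : ℤ) - (a₁ : ℤ)))) / (Real.sqrt d : ℝ)))
      = if j = k then (d : ℂ) else 0 := by
  have hterm : ∀ a₁ a₂ : Fin d,
      ((efn d ((a₂ : ℤ) * ((j : ℤ) - (a₁ : ℤ))) / (Real.sqrt d : ℝ)) *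
          (efn d (-((a₂ : ℤ) * ((k : ℤ) - (a₁ : ℤ)))) / (Real.sqrt d : ℝ)))
        = efn d (((j : ℤ) - (k : ℤ)) * a₂) / (d : ℂ) := by
    intro a₁ a₂
    rw [div_mul_div_comm, ← efn_add, sqrtC_mul_self]
    congr 2
    ring
  calc ∑ a₁ : Fin d, ∑ a₂ : Fin d,
        ((efn d ((a₂ : ℤ) * ((j : ℤ) - (a₁ : ℤ))) / (Real.sqrt d : ℝ)) *
          (efn d (-((a₂ : ℤ) * ((k : ℤ) - (a₁ : ℤ)))) / (Real.sqrt d : ℝ)))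
      = ∑ _a₁ : Fin d, ((if (d:ℤ) ∣ ((j : ℤ) - k) then (d : ℂ) else 0) / (d : ℂ)) := by
        refine Finset.sum_congr rfl fun a₁ _ => ?_
        rw [← efn_sum d hd ((j : ℤ) - k), Finset.sum_div]
        exact Finset.sum_congr rfl fun a₂ _ => hterm a₁ a₂
    _ = if j = k then (d : ℂ) else 0 := by
        have hdc : (d : ℂ) ≠ 0 := by
          exact_mod_cast (Nat.one_le_iff_ne_zero.mp hd)
        simp only [fin_dvd_sub_iff, Finset.sum_const, Finset.card_univ, Fintype.card_fin,
          nsmul_eq_mul]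
        by_cases h : j = k
        · simp [h, div_self hdc]
        · simp [h]

lemma avec_entry_sum (hd : 1 ≤ d) (j k : Fin d) :
    ∑ a₁ : Fin d, ∑ a₂ : Fin d, avec d a₁ a₂ j * (starRingEnd ℂ) (avec d a₁ a₂ k)
      = if j = k then (2 * (d : ℂ) + 2 * ((Real.sqrt d : ℝ) : ℂ)) else 0 := by
  have hexp : ∀ a₁ a₂ : Fin d,
      avec d a₁ a₂ j * (starRingEnd ℂ) (avec d a₁ a₂ k)
        = ((if j = a₁ then (1:ℂ) else 0) * (if k = a₁ then 1 else 0))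
          + (((if j = a₁ then (1:ℂ) else 0) *
              (efn d (-((a₂ : ℤ) * ((k : ℤ) - (a₁ : ℤ)))) / (Real.sqrt d : ℝ)))
          + (((efn d ((a₂ : ℤ) * ((j : ℤ) - (a₁ : ℤ))) / (Real.sqrt d : ℝ)) *
              (if k = a₁ then (1:ℂ) else 0))
          + ((efn d ((a₂ : ℤ) * ((j : ℤ) - (a₁ : ℤ))) / (Real.sqrt d : ℝ)) *
              (efn d (-((a₂ : ℤ) * ((k : ℤ) - (a₁ : ℤ)))) / (Real.sqrt d : ℝ))))) := by
    intro a₁ a₂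
    rw [avec_conj, avec]
    ring
  calc ∑ a₁ : Fin d, ∑ a₂ : Fin d, avec d a₁ a₂ j * (starRingEnd ℂ) (avec d a₁ a₂ k)
      = (∑ a₁ : Fin d, ∑ a₂ : Fin d,
          ((if j = a₁ then (1:ℂ) else 0) * (if k = a₁ then 1 else 0)))
        + ((∑ a₁ : Fin d, ∑ a₂ : Fin d,
            ((if j = a₁ then (1:ℂ) else 0) *
              (efn d (-((a₂ : ℤ) * ((k : ℤ) - (a₁ : ℤ)))) / (Real.sqrt d : ℝ))))
        + ((∑ a₁ : Fin d, ∑ a₂ : Fin d,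
            ((efn d ((a₂ : ℤ) * ((j : ℤ) - (a₁ : ℤ))) / (Real.sqrt d : ℝ)) *
              (if k = a₁ then (1:ℂ) else 0)))
        + (∑ a₁ : Fin d, ∑ a₂ : Fin d,
            ((efn d ((a₂ : ℤ) * ((j : ℤ) - (a₁ : ℤ))) / (Real.sqrt d : ℝ)) *
              (efn d (-((a₂ : ℤ) * ((k : ℤ) - (a₁ : ℤ)))) / (Real.sqrt d : ℝ)))))) := by
        simp only [← Finset.sum_add_distrib]
        exact Finset.sum_congr rfl fun a₁ _ => Finset.sum_congr rfl fun a₂ _ => hexp a₁ a₂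
    _ = if j = k then (2 * (d : ℂ) + 2 * ((Real.sqrt d : ℝ) : ℂ)) else 0 := by
        rw [S1sum, S2sum hd, S3sum hd, S4sum hd]
        by_cases h : j = k <;> simp [h] <;> ring

lemma cC_mul (hd : 1 ≤ d) :
    ((cC d : ℝ) : ℂ) * (2 * (d : ℂ) + 2 * ((Real.sqrt d : ℝ) : ℂ)) = 1 := by
  have hr : cC d * (2 * (d : ℝ) + 2 * Real.sqrt d) = 1 := by
    have h1 : (0:ℝ) < d := by exact_mod_cast hd
    have h2 : (0:ℝ) < 2 * (d:ℝ) + 2 * Real.sqrt d := by positivity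
    rw [cC]
    field_simp
  calc ((cC d : ℝ) : ℂ) * (2 * (d : ℂ) + 2 * ((Real.sqrt d : ℝ) : ℂ))
      = ((cC d * (2 * (d : ℝ) + 2 * Real.sqrt d) : ℝ) : ℂ) := by push_cast; ring
    _ = 1 := by rw [hr]; norm_num

lemma fin2_cases (c : Fin 2) : c = 0 ∨ c = 1 := by
  fin_cases c
  · exact Or.inl rfl
  · exact Or.inr rfl

lemma comp_mixed (hd : 1 ≤ d) :
    ∑ a₁ : Fin d, ∑ a₂ : Fin d, ((cC d : ℝ) : ℂ) • outerM d (avec d a₁ a₂) = 1 := by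
  ext j k
  rw [Matrix.sum_apply]
  simp only [Matrix.sum_apply, Matrix.smul_apply, outerM, Matrix.of_apply, smul_eq_mul,
    Matrix.one_apply]
  have hfac : ∑ a₁ : Fin d, ∑ a₂ : Fin d,
      ((cC d : ℝ) : ℂ) * (avec d a₁ a₂ j * (starRingEnd ℂ) (avec d a₁ a₂ k))
      = ((cC d : ℝ) : ℂ) * ∑ a₁ : Fin d, ∑ a₂ : Fin d,
        (avec d a₁ a₂ j * (starRingEnd ℂ) (avec d a₁ a₂ k)) := by
    rw [Finset.mul_sum]
    exact Finset.sum_congr rfl fun a₁ _ => by rw [Finset.mul_sum]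
  rw [hfac, avec_entry_sum hd]
  by_cases h : j = k
  · rw [if_pos h, if_pos h, cC_mul hd]
  · simp [h]

lemma attackA_complete (hd : 1 ≤ d) (c₁ c₂ : Fin 2) :
    ∑ a₁ : Fin d, ∑ a₂ : Fin d, attackA d c₁ c₂ a₁ a₂ = 1 := by
  rcases fin2_cases c₁ with rfl | rfl <;> rcases fin2_cases c₂ with rfl | rfl
  · -- (0,0)
    simp only [attackA, if_pos rfl, Finset.sum_ite_eq, Finset.mem_univ, if_true]
    ext j k
    rw [Matrix.sum_apply]
    simp only [outerM, Matrix.of_apply, Matrix.one_apply]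
    by_cases h : j = k
    · subst h
      rw [Finset.sum_eq_single j] <;> simp +contextual [eq_comm]
    · rw [Finset.sum_eq_zero]
      · simp [h]
      · intro a _
        by_cases hja : j = a <;> by_cases hka : k = a
        · exact absurd (hja.trans hka.symm) h
        all_goals simp [hja, hka]
  · -- (0,1)
    simpa only [attackA, if_pos rfl, ite_true, if_neg (one_ne_zero : (1 : Fin 2) ≠ 0)]
      using comp_mixed hd
  · -- (1,0)
    have h := comp_mixed (d := d) hd
    rw [Finset.sum_comm] at h
    simpa only [attackA, if_neg (one_ne_zero : (1 : Fin 2) ≠ 0), if_pos rfl, ite_true] using h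
  · -- (1,1)
    simp only [attackA, if_neg (one_ne_zero : (1 : Fin 2) ≠ 0), Finset.sum_ite_eq,
      Finset.mem_univ, if_true]
    ext j k
    rw [Matrix.sum_apply]
    have hterm : ∀ a : Fin d,
        (outerM d (fun j' => fourierMat d j' a)) j k
          = efn d (((j : ℤ) - (k : ℤ)) * a) / (d : ℂ) := by
      intro a
      simp only [outerM, Matrix.of_apply]
      rw [fourierMat_apply, fourierMat_apply, map_div₀, efn_conj, Complex.conj_ofReal,
        div_mul_div_comm, ← efn_add, sqrtC_mul_self]
      congr 2
      ring
    rw [Finset.sum_congr rfl fun a _ => hterm a, ← Finset.sum_div, efn_sum d hd]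
    have hdc : (d : ℂ) ≠ 0 := by exact_mod_cast (Nat.one_le_iff_ne_zero.mp hd)
    simp only [fin_dvd_sub_iff, Matrix.one_apply]
    by_cases h : j = k <;> simp [h, div_self hdc]
end sums

section prob
variable {d : ℕ}

lemma cC_nonneg (d : ℕ) : 0 ≤ cC d := by
  rw [cC]
  positivity

lemma attackA_psd (d : ℕ) (c₁ c₂ : Fin 2) (a₁ a₂ : Fin d) :
    (attackA d c₁ c₂ a₁ a₂).PosSemidef := by
  rw [attackA]
  split
  · split
    · split
      · exact outerM_psd d _
      · exact Matrix.PosSemidef.zero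
    · exact outerM_psd_smul d _ _ (cC_nonneg d)
  · split
    · exact outerM_psd_smul d _ _ (cC_nonneg d)
    · split
      · exact outerM_psd d _
      · exact Matrix.PosSemidef.zero

lemma dot_delta_right (w : Fin d → ℂ) (t : Fin d) :
    star w ⬝ᵥ (fun j => if j = t then (1:ℂ) else 0) = (starRingEnd ℂ) (w t) := by
  simp [dotProduct, Pi.star_apply, RCLike.star_def, mul_ite, Finset.sum_ite_eq']

lemma dot_delta_left (ψ : Fin d → ℂ) (a : Fin d) :
    star (fun j => if j = a then (1:ℂ) else 0) ⬝ᵥ ψ = ψ a := by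
  have h : ∀ j : Fin d, star (if j = a then (1:ℂ) else 0) = if j = a then (1:ℂ) else 0 := by
    intro j; split <;> simp
  simp only [dotProduct, Pi.star_apply, h, ite_mul, one_mul, zero_mul]
  simp [Finset.sum_ite_eq']

lemma avec_self (a₁ a₂ : Fin d) :
    avec d a₁ a₂ a₁ = 1 + 1 / ((Real.sqrt d : ℝ) : ℂ) := by
  simp [avec, efn_zero, one_div]

lemma normSq_one_add_inv (d : ℕ) :
    Complex.normSq (1 + 1 / ((Real.sqrt d : ℝ) : ℂ)) = (1 + 1 / Real.sqrt d) ^ 2 := by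
  have h : (1 + 1 / ((Real.sqrt d : ℝ) : ℂ)) = (((1 + 1 / Real.sqrt d : ℝ)) : ℂ) := by
    push_cast; ring
  rw [h, Complex.normSq_ofReal]
  ring

lemma normSq_fourier (hd : 1 ≤ d) (j i : Fin d) :
    Complex.normSq (fourierMat d j i) = 1 / d := by
  rw [fourierMat_apply, Complex.normSq_div, efn_normSq, Complex.normSq_ofReal,
    sqrt_mul_self' d]

lemma dot_avec_fourier (hd : 1 ≤ d) (a₁ t : Fin d) :
    star (avec d a₁ t) ⬝ᵥ (fun j => fourierMat d j t)
      = efn d ((a₁ : ℤ) * t) * (1 + 1 / ((Real.sqrt d : ℝ) : ℂ)) := by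
  have hdc : (d : ℂ) ≠ 0 := by exact_mod_cast (Nat.one_le_iff_ne_zero.mp hd)
  have hterm : ∀ j : Fin d,
      star (avec d a₁ t j) * fourierMat d j t
        = (if j = a₁ then (1:ℂ) else 0) * (efn d ((j : ℤ) * t) / (Real.sqrt d : ℝ))
          + efn d ((a₁ : ℤ) * t) / (d : ℂ) := by
    intro j
    rw [RCLike.star_def, avec_conj, fourierMat_apply, add_mul]
    congr 1
    rw [div_mul_div_comm, ← efn_add, sqrtC_mul_self]
    congr 2
    ring
  rw [dotProduct]
  simp only [Pi.star_apply]
  rw [Finset.sum_congr rfl fun j _ => hterm j, Finset.sum_add_distrib]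
  have h1 : ∑ j : Fin d, (if j = a₁ then (1:ℂ) else 0) * (efn d ((j : ℤ) * t) / (Real.sqrt d : ℝ))
      = efn d ((a₁ : ℤ) * t) / (Real.sqrt d : ℝ) := by
    simp [ite_mul, Finset.sum_ite_eq']
  have h2 : ∑ _j : Fin d, efn d ((a₁ : ℤ) * t) / (d : ℂ) = efn d ((a₁ : ℤ) * t) := by
    rw [Finset.sum_const, Finset.card_univ, Fintype.card_fin, nsmul_eq_mul,
      mul_div_assoc', mul_comm, mul_div_assoc, div_self hdc, mul_one]
  rw [h1, h2]
  ring

lemma dot_fourier_self (hd : 1 ≤ d) (t : Fin d) :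
    star (fun j => fourierMat d j t) ⬝ᵥ (fun j => fourierMat d j t) = 1 := by
  have hdc : (d : ℂ) ≠ 0 := by exact_mod_cast (Nat.one_le_iff_ne_zero.mp hd)
  have hterm : ∀ j : Fin d,
      star (fourierMat d j t) * fourierMat d j t = 1 / (d : ℂ) := by
    intro j
    rw [RCLike.star_def, fourierMat_apply, map_div₀, efn_conj, Complex.conj_ofReal,
      div_mul_div_comm, ← efn_add, sqrtC_mul_self, neg_add_cancel, efn_zero]
  rw [dotProduct]
  simp only [Pi.star_apply]
  rw [Finset.sum_congr rfl fun j _ => hterm j, Finset.sum_const, Finset.card_univ,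
    Fintype.card_fin, nsmul_eq_mul, mul_one_div, div_self hdc]

lemma quad_zero_re (ψ : Fin d → ℂ) :
    (star ψ ⬝ᵥ (0 : Matrix (Fin d) (Fin d) ℂ) *ᵥ ψ).re = 0 := by
  simp [Matrix.zero_mulVec]

lemma key_arith (hd : 1 ≤ d) :
    (d : ℝ) * (cC d * (1 + 1 / Real.sqrt d) ^ 2) = (1 + 1 / Real.sqrt d) / 2 := by
  have hs : (0:ℝ) < Real.sqrt d := Real.sqrt_pos.mpr (by exact_mod_cast hd)
  have hss : Real.sqrt d * Real.sqrt d = (d:ℝ) := sqrt_mul_self' d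
  have h2 : 2 * (d:ℝ) + 2 * Real.sqrt d ≠ 0 := by positivity
  rw [cC]
  field_simp
  linear_combination (-1 : ℝ) * hss
end prob

section qval
variable {d : ℕ}

lemma fticket_zero (d : ℕ) (t : Fin d) :
    fticket d 0 t = fun j => if j = t then (1:ℂ) else 0 := by
  simp [fticket]

lemma fticket_one (d : ℕ) (t : Fin d) :
    fticket d 1 t = fun j => fourierMat d j t := by
  rw [fticket, if_neg one_ne_zero]

lemma Qval (hd : 1 ≤ d) (b c₁ c₂ : Fin 2) (t : Fin d) :
    ∑ a₁ : Fin d, ∑ a₂ : Fin d,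
        (if (c₁ = b → a₁ = t) ∧ (c₂ = b → a₂ = t)
          then (star (fticket d b t) ⬝ᵥ (attackA d c₁ c₂ a₁ a₂) *ᵥ (fticket d b t)).re
          else 0)
      = if c₁ = c₂ then 1 else (1 + 1 / Real.sqrt d) / 2 := by
  have f00 : ((0:Fin 2) = 0) = True := by simp
  have f10 : ((1:Fin 2) = 0) = False := by simp
  have f01 : ((0:Fin 2) = 1) = False := by simp
  have f11 : ((1:Fin 2) = 1) = True := by simp
  rcases fin2_cases b with rfl | rfl <;> rcases fin2_cases c₁ with rfl | rfl <;>
    rcases fin2_cases c₂ with rfl | rfl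
  · -- b=0, c=(0,0)
    simp only [f00, f10, f01, f11, true_implies, false_implies, true_and, and_true, if_true,
      if_false, attackA, fticket_zero]
    rw [Finset.sum_eq_single t (fun a _ ha => Finset.sum_eq_zero fun a₂ _ => by
        rw [if_neg (by simp [ha])]) (by simp)]
    rw [Finset.sum_eq_single t (fun a _ ha => by rw [if_neg (by simp [ha])]) (by simp)]
    rw [if_pos ⟨rfl, rfl⟩, if_pos rfl, outerM_quad_re, dot_delta_left]
    simp
  · -- b=0, c=(0,1)
    simp only [f00, f10, f01, f11, true_implies, false_implies, true_and, and_true, if_true,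
      if_false, attackA, fticket_zero]
    rw [Finset.sum_eq_single t (fun a _ ha => Finset.sum_eq_zero fun a₂ _ => if_neg ha)
      (by simp)]
    have hterm : ∀ a₂ : Fin d,
        (if t = t then ((star fun j => if j = t then (1:ℂ) else 0) ⬝ᵥ
            (((cC d : ℝ) : ℂ) • outerM d (avec d t a₂)) *ᵥ fun j => if j = t then 1 else 0).re
          else 0) = cC d * (1 + 1 / Real.sqrt d) ^ 2 := by
      intro a₂
      rw [if_pos rfl, outerM_smul_quad_re, dot_delta_right, avec_self, Complex.normSq_conj,
        normSq_one_add_inv]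
    rw [Finset.sum_congr rfl fun a₂ _ => hterm a₂, Finset.sum_const, Finset.card_univ,
      Fintype.card_fin, nsmul_eq_mul, key_arith hd]
  · -- b=0, c=(1,0)
    simp only [f00, f10, f01, f11, true_implies, false_implies, true_and, and_true, if_true,
      if_false, attackA, fticket_zero]
    have hinner : ∀ x : Fin d,
        (∑ x₁ : Fin d, if x₁ = t then
            ((star fun j => if j = t then (1:ℂ) else 0) ⬝ᵥ
              (((cC d : ℝ) : ℂ) • outerM d (avec d x₁ x)) *ᵥ fun j => if j = t then 1 else 0).re
          else 0) = cC d * (1 + 1 / Real.sqrt d) ^ 2 := by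
      intro x
      rw [Finset.sum_eq_single t (fun a _ ha => if_neg ha) (by simp), if_pos rfl,
        outerM_smul_quad_re, dot_delta_right, avec_self, Complex.normSq_conj,
        normSq_one_add_inv]
    rw [Finset.sum_congr rfl fun x _ => hinner x, Finset.sum_const, Finset.card_univ,
      Fintype.card_fin, nsmul_eq_mul, key_arith hd]
  · -- b=0, c=(1,1)
    simp only [f00, f10, f01, f11, true_implies, false_implies, true_and, and_true, if_true,
      if_false, attackA, fticket_zero]
    have hd0 : (d:ℝ) ≠ 0 := by exact_mod_cast (Nat.one_le_iff_ne_zero.mp hd)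
    have hterm : ∀ x x₁ : Fin d,
        ((star fun j => if j = t then (1:ℂ) else 0) ⬝ᵥ
            (if x = x₁ then outerM d (fun j => fourierMat d j x) else 0) *ᵥ
              fun j => if j = t then 1 else 0).re
          = if x = x₁ then (1 / d : ℝ) else 0 := by
      intro x x₁
      split
      · rw [outerM_quad_re, dot_delta_right, Complex.normSq_conj, normSq_fourier hd]
      · exact quad_zero_re _
    rw [Finset.sum_congr rfl fun x _ => Finset.sum_congr rfl fun x₁ _ => hterm x x₁]
    simp [Finset.sum_ite_eq, Finset.card_univ, hd0]
  · -- b=1, c=(0,0)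
    simp only [f00, f10, f01, f11, true_implies, false_implies, true_and, and_true, if_true,
      if_false, attackA, fticket_one]
    have hd0 : (d:ℝ) ≠ 0 := by exact_mod_cast (Nat.one_le_iff_ne_zero.mp hd)
    have hterm : ∀ x x₁ : Fin d,
        ((star fun j => fourierMat d j t) ⬝ᵥ
            (if x = x₁ then outerM d (fun j => if j = x then (1:ℂ) else 0) else 0) *ᵥ
              fun j => fourierMat d j t).re
          = if x = x₁ then (1 / d : ℝ) else 0 := by
      intro x x₁
      split
      · rw [outerM_quad_re, dot_delta_left, normSq_fourier hd]
      · exact quad_zero_re _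
    rw [Finset.sum_congr rfl fun x _ => Finset.sum_congr rfl fun x₁ _ => hterm x x₁]
    simp [Finset.sum_ite_eq, Finset.card_univ, hd0]
  · -- b=1, c=(0,1)
    simp only [f00, f10, f01, f11, true_implies, false_implies, true_and, and_true, if_true,
      if_false, attackA, fticket_one]
    have hinner : ∀ x : Fin d,
        (∑ x₁ : Fin d, if x₁ = t then
            ((star fun j => fourierMat d j t) ⬝ᵥ
              (((cC d : ℝ) : ℂ) • outerM d (avec d x x₁)) *ᵥ fun j => fourierMat d j t).re
          else 0) = cC d * (1 + 1 / Real.sqrt d) ^ 2 := by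
      intro x
      rw [Finset.sum_eq_single t (fun a _ ha => if_neg ha) (by simp), if_pos rfl,
        outerM_smul_quad_re, dot_avec_fourier hd, Complex.normSq_mul, efn_normSq, one_mul,
        normSq_one_add_inv]
    rw [Finset.sum_congr rfl fun x _ => hinner x, Finset.sum_const, Finset.card_univ,
      Fintype.card_fin, nsmul_eq_mul, key_arith hd]
  · -- b=1, c=(1,0)
    simp only [f00, f10, f01, f11, true_implies, false_implies, true_and, and_true, if_true,
      if_false, attackA, fticket_one]
    rw [Finset.sum_eq_single t (fun a _ ha => Finset.sum_eq_zero fun a₂ _ => if_neg ha)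
      (by simp)]
    have hterm : ∀ a₂ : Fin d,
        (if t = t then ((star fun j => fourierMat d j t) ⬝ᵥ
            (((cC d : ℝ) : ℂ) • outerM d (avec d a₂ t)) *ᵥ fun j => fourierMat d j t).re
          else 0) = cC d * (1 + 1 / Real.sqrt d) ^ 2 := by
      intro a₂
      rw [if_pos rfl, outerM_smul_quad_re, dot_avec_fourier hd, Complex.normSq_mul,
        efn_normSq, one_mul, normSq_one_add_inv]
    rw [Finset.sum_congr rfl fun a₂ _ => hterm a₂, Finset.sum_const, Finset.card_univ,
      Fintype.card_fin, nsmul_eq_mul, key_arith hd]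
  · -- b=1, c=(1,1)
    simp only [f00, f10, f01, f11, true_implies, false_implies, true_and, and_true, if_true,
      if_false, attackA, fticket_one]
    rw [Finset.sum_eq_single t (fun a _ ha => Finset.sum_eq_zero fun a₂ _ => by
        rw [if_neg (by simp [ha])]) (by simp)]
    rw [Finset.sum_eq_single t (fun a _ ha => by rw [if_neg (by simp [ha])]) (by simp)]
    rw [if_pos ⟨rfl, rfl⟩, if_pos rfl, outerM_quad_re, dot_fourier_self hd]
    simp
end qval

/-- For the single-qudit classical-verification ticket scheme built from the
computational basis and its Fourier transform (key `(t,b)` uniform, ticket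
`fticket d b t`, two independent uniform challenges `c₁,c₂ ∈ {0,1}`, answers
`(a₁,a₂)` accepted iff `a_j = t` whenever `c_j = b`), there is a counterfeiting
strategy, given by POVMs `{A_{c₁c₂}^{a₁a₂}}` on `ℂ^d`, whose success probability is
exactly `3/4 + 1/(4√d)`. -/
theorem fourier_scheme_attack (d : ℕ) (hd : 1 ≤ d) :
    ∃ A : Fin 2 → Fin 2 → Fin d → Fin d → Matrix (Fin d) (Fin d) ℂ,
      (∀ c₁ c₂ a₁ a₂, (A c₁ c₂ a₁ a₂).PosSemidef) ∧
      (∀ c₁ c₂, ∑ a₁, ∑ a₂, A c₁ c₂ a₁ a₂ = 1) ∧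
      (1 / (2 * d) : ℝ) * ∑ b : Fin 2, ∑ t : Fin d,
          (1 / 4 : ℝ) * ∑ c₁ : Fin 2, ∑ c₂ : Fin 2, ∑ a₁ : Fin d, ∑ a₂ : Fin d,
            (if (c₁ = b → a₁ = t) ∧ (c₂ = b → a₂ = t)
              then (star (fticket d b t) ⬝ᵥ
                (A c₁ c₂ a₁ a₂).mulVec (fticket d b t)).re
              else 0)
        = 3 / 4 + 1 / (4 * Real.sqrt d) := by
  refine ⟨attackA d, attackA_psd d, fun c₁ c₂ => attackA_complete hd c₁ c₂, ?_⟩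
  have hsum : ∀ (b : Fin 2) (t : Fin d),
      ∑ c₁ : Fin 2, ∑ c₂ : Fin 2, ∑ a₁ : Fin d, ∑ a₂ : Fin d,
        (if (c₁ = b → a₁ = t) ∧ (c₂ = b → a₂ = t)
          then (star (fticket d b t) ⬝ᵥ
            (attackA d c₁ c₂ a₁ a₂).mulVec (fticket d b t)).re
          else 0)
      = 2 + 2 * ((1 + 1 / Real.sqrt d) / 2) := by
    intro b t
    rw [Fin.sum_univ_two, Fin.sum_univ_two, Fin.sum_univ_two]
    rw [Qval hd b 0 0 t, Qval hd b 0 1 t, Qval hd b 1 0 t, Qval hd b 1 1 t]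
    rw [if_pos rfl, if_pos rfl, if_neg (zero_ne_one : (0 : Fin 2) ≠ 1),
      if_neg (one_ne_zero : (1 : Fin 2) ≠ 0)]
    ring
  rw [Finset.sum_congr rfl fun b _ => Finset.sum_congr rfl fun t _ => by rw [hsum b t]]
  rw [Finset.sum_const, Finset.sum_const, Finset.card_univ, Finset.card_univ,
    Fintype.card_fin, Fintype.card_fin, nsmul_eq_mul, nsmul_eq_mul]
  have hs : (0:ℝ) < Real.sqrt d := Real.sqrt_pos.mpr (by exact_mod_cast hd)
  have hd0 : (d:ℝ) ≠ 0 := by exact_mod_cast (Nat.one_le_iff_ne_zero.mp hd)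
  field_simp
  ring
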